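/- arXiv:1310.5930 — 6 statements merged into one kernel-verified Lean document; each statement's English description precedes it below -/
import Mathlib

section
/- For every r_obs > 0 and every t > 0, one has ∫₀^t [ erf( r_obs/(2√τ) ) − (r_obs/√(πτ))·exp(−r_obs²/(4τ)) ] dτ = erf( r_obs/(2√t) )·( t − r_obs²/2 ) − r_obs·√(t/π)·exp(−r_obs²/(4t)) + r_obs²/2. -/
open Real MeasureTheory Filter

/-- The error function `erf a = (2/√π) ∫₀^a exp(−b²) db`. -/
noncomputable def erf (a : ℝ) : ℝ := (2 / Real.sqrt π) * ∫ b in (0:ℝ)..a, Real.exp (-b^2)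

lemma erf_hasDerivAt (a : ℝ) : HasDerivAt erf (2 / Real.sqrt π * Real.exp (-a^2)) a := by
  have hc : Continuous (fun b : ℝ => Real.exp (-b^2)) := by continuity
  have h := (hc.integral_hasStrictDerivAt 0 a).hasDerivAt
  exact h.const_mul (2 / Real.sqrt π)

lemma erf_continuous : Continuous erf :=
  continuous_iff_continuousAt.2 fun a => (erf_hasDerivAt a).continuousAt

lemma abs_erf_le (x : ℝ) : |erf x| ≤ 2 := by
  have hint : Integrable (fun b : ℝ => Real.exp (-b^2)) := by
    have := integrable_exp_neg_mul_sq (b := (1:ℝ)) one_pos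
    simpa using this
  have h1 : |∫ b in (0:ℝ)..x, Real.exp (-b^2)| ≤ ∫ b, Real.exp (-b^2) := by
    rw [intervalIntegral.abs_intervalIntegral_eq]
    have h0 : (0:ℝ) ≤ ∫ b in Set.uIoc 0 x, Real.exp (-b^2) :=
      setIntegral_nonneg measurableSet_uIoc fun b _ => (Real.exp_pos _).le
    rw [abs_of_nonneg h0]
    apply setIntegral_le_integral hint
    filter_upwards with b using (Real.exp_pos _).le
  have h2 : (∫ b : ℝ, Real.exp (-b^2)) = Real.sqrt π := by
    have := integral_gaussian (1:ℝ)
    simpa using this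
  rw [h2] at h1
  have hπ : 0 < Real.sqrt π := Real.sqrt_pos.2 pi_pos
  rw [erf, abs_mul, abs_of_nonneg (by positivity : (0:ℝ) ≤ 2 / Real.sqrt π)]
  calc 2 / Real.sqrt π * |∫ b in (0:ℝ)..x, Real.exp (-b^2)|
      ≤ 2 / Real.sqrt π * Real.sqrt π := by
        exact mul_le_mul_of_nonneg_left h1 (by positivity)
    _ = 2 := by field_simp

open Filter in
lemma erf_tendsto_one : Tendsto erf atTop (nhds 1) := by
  have hI : Integrable (fun b : ℝ => Real.exp (-b^2)) := by
    have := integrable_exp_neg_mul_sq (b := (1:ℝ)) one_pos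
    simpa using this
  have hint : IntegrableOn (fun b : ℝ => Real.exp (-b^2)) (Set.Ioi 0) := hI.integrableOn
  have h1 : Tendsto (fun x : ℝ => ∫ b in (0:ℝ)..x, Real.exp (-b^2)) atTop
      (nhds (∫ b in Set.Ioi (0:ℝ), Real.exp (-b^2))) :=
    intervalIntegral_tendsto_integral_Ioi 0 hint tendsto_id
  have h2 : (∫ b in Set.Ioi (0:ℝ), Real.exp (-b^2)) = Real.sqrt π / 2 := by
    have := integral_gaussian_Ioi (1:ℝ)
    simpa using this
  rw [h2] at h1
  have hπ : Real.sqrt π ≠ 0 := ne_of_gt (Real.sqrt_pos.2 pi_pos)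
  have h3 := h1.const_mul (2 / Real.sqrt π)
  have heq : 2 / Real.sqrt π * (Real.sqrt π / 2) = 1 := by field_simp
  rw [heq] at h3
  exact h3

lemma hasDerivAt_F (r : ℝ) (hr : 0 < r) {τ : ℝ} (hτ : 0 < τ) :
    HasDerivAt (fun τ => erf (r / (2 * Real.sqrt τ)) * (τ - r^2/2)
        - r * Real.sqrt (τ/π) * Real.exp (-(r^2) / (4*τ)) + r^2/2)
      (erf (r / (2 * Real.sqrt τ))
        - (r / Real.sqrt (π*τ)) * Real.exp (-(r^2) / (4*τ))) τ := by
  have hs : 0 < Real.sqrt τ := Real.sqrt_pos.2 hτ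
  have hπ : 0 < Real.sqrt π := Real.sqrt_pos.2 pi_pos
  have hsqrt : HasDerivAt Real.sqrt (1 / (2 * Real.sqrt τ)) τ := Real.hasDerivAt_sqrt hτ.ne'
  have h2s : HasDerivAt (fun τ => 2 * Real.sqrt τ) (2 * (1 / (2 * Real.sqrt τ))) τ :=
    hsqrt.const_mul 2
  have hg : HasDerivAt (fun τ => r / (2 * Real.sqrt τ))
      ((0 * (2 * Real.sqrt τ) - r * (2 * (1 / (2 * Real.sqrt τ)))) / (2 * Real.sqrt τ)^2) τ :=
    (hasDerivAt_const τ r).div h2s (by positivity)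
  have herf : HasDerivAt (fun τ => erf (r / (2 * Real.sqrt τ)))
      (2 / Real.sqrt π * Real.exp (-(r / (2 * Real.sqrt τ))^2) *
        ((0 * (2 * Real.sqrt τ) - r * (2 * (1 / (2 * Real.sqrt τ)))) / (2 * Real.sqrt τ)^2)) τ :=
    by have := (erf_hasDerivAt (r / (2 * Real.sqrt τ))).comp τ hg; exact this
  have hlin : HasDerivAt (fun τ : ℝ => τ - r^2/2) 1 τ := by
    simpa using (hasDerivAt_id τ).sub_const (r^2/2)
  have hτπ : τ / π ≠ 0 := by positivity
  have hdivπ : HasDerivAt (fun τ : ℝ => τ / π) (1/π) τ := by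
    simpa using (hasDerivAt_id τ).div_const π
  have hsq2 : HasDerivAt (fun τ => Real.sqrt (τ/π)) (1 / (2 * Real.sqrt (τ/π)) * (1/π)) τ :=
    (Real.hasDerivAt_sqrt hτπ).comp τ hdivπ
  have hinner : HasDerivAt (fun τ : ℝ => -(r^2) / (4*τ))
      ((0 * (4*τ) - -(r^2) * 4) / (4*τ)^2) τ := by
    have h4 : HasDerivAt (fun τ : ℝ => 4*τ) 4 τ := by
      simpa using (hasDerivAt_id τ).const_mul 4
    exact (hasDerivAt_const τ (-(r^2))).div h4 (by positivity)
  have hexp : HasDerivAt (fun τ : ℝ => Real.exp (-(r^2) / (4*τ)))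
      (Real.exp (-(r^2) / (4*τ)) * ((0 * (4*τ) - -(r^2) * 4) / (4*τ)^2)) τ := hinner.exp
  have hF := ((herf.mul hlin).sub ((hsq2.const_mul r).mul hexp)).add_const (r^2/2)
  convert hF using 1
  · rfl
  · rfl
  · rfl
  have hsq : (-(r / (2 * Real.sqrt τ))^2) = -(r^2) / (4*τ) := by
    rw [div_pow, mul_pow, Real.sq_sqrt hτ.le]
    ring
  rw [hsq]
  have hsp : Real.sqrt (π*τ) = Real.sqrt π * Real.sqrt τ := Real.sqrt_mul pi_pos.le τ
  have hsd : Real.sqrt (τ/π) = Real.sqrt τ / Real.sqrt π := Real.sqrt_div hτ.le π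
  rw [hsp, hsd]
  have e1 : Real.sqrt τ ^ 2 = τ := Real.sq_sqrt hτ.le
  have e2 : Real.sqrt π ^ 2 = π := Real.sq_sqrt pi_pos.le
  set s := Real.sqrt τ with hsdef
  set p := Real.sqrt π with hpdef
  clear_value s p
  rw [← e1, ← e2]
  field_simp
  ring


lemma tendsto_F_zero (r : ℝ) (hr : 0 < r) :
    Tendsto (fun τ => erf (r / (2 * Real.sqrt τ)) * (τ - r^2/2)
        - r * Real.sqrt (τ/π) * Real.exp (-(r^2) / (4*τ)) + r^2/2)
      (nhdsWithin 0 (Set.Ioi 0)) (nhds 0) := by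
  have hsq : Tendsto Real.sqrt (nhdsWithin 0 (Set.Ioi 0)) (nhdsWithin 0 (Set.Ioi 0)) := by
    rw [tendsto_nhdsWithin_iff]
    constructor
    · exact (Real.continuous_sqrt.tendsto' 0 0 Real.sqrt_zero).mono_left nhdsWithin_le_nhds
    · filter_upwards [self_mem_nhdsWithin] with τ hτ
      exact Real.sqrt_pos.2 hτ
  have h2s : Tendsto (fun τ => 2 * Real.sqrt τ) (nhdsWithin 0 (Set.Ioi 0))
      (nhdsWithin 0 (Set.Ioi 0)) := by
    rw [tendsto_nhdsWithin_iff]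
    constructor
    · have := (hsq.mono_right nhdsWithin_le_nhds).const_mul (2:ℝ)
      simpa using this
    · filter_upwards [hsq self_mem_nhdsWithin] with τ hτ
      have h : (0:ℝ) < Real.sqrt τ := hτ
      exact Set.mem_Ioi.2 (by positivity)
  have hA : Tendsto (fun τ => r / (2 * Real.sqrt τ)) (nhdsWithin 0 (Set.Ioi 0)) atTop := by
    have hinv : Tendsto (fun x : ℝ => x⁻¹) (nhdsWithin 0 (Set.Ioi 0)) atTop :=
      tendsto_inv_nhdsGT_zero
    have := (hinv.comp h2s).const_mul_atTop hr
    simpa [div_eq_mul_inv, Function.comp] using this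
  have herf1 : Tendsto (fun τ => erf (r / (2 * Real.sqrt τ))) (nhdsWithin 0 (Set.Ioi 0))
      (nhds 1) := erf_tendsto_one.comp hA
  have hlin : Tendsto (fun τ : ℝ => τ - r^2/2) (nhdsWithin 0 (Set.Ioi 0)) (nhds (0 - r^2/2)) :=
    ((continuous_id.sub continuous_const).tendsto 0).mono_left nhdsWithin_le_nhds
  have h1 := herf1.mul hlin
  have hsqp : Tendsto (fun τ : ℝ => r * Real.sqrt (τ/π)) (nhdsWithin 0 (Set.Ioi 0)) (nhds 0) := by
    have : Tendsto (fun τ : ℝ => r * Real.sqrt (τ/π)) (nhds 0) (nhds (r * Real.sqrt (0/π))) :=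
      (continuous_const.mul (Real.continuous_sqrt.comp (continuous_id.div_const π))).tendsto 0
    simpa using this.mono_left nhdsWithin_le_nhds
  have hexp : Tendsto (fun τ : ℝ => Real.exp (-(r^2) / (4*τ))) (nhdsWithin 0 (Set.Ioi 0))
      (nhds 0) := by
    apply Real.tendsto_exp_atBot.comp
    have hinv : Tendsto (fun x : ℝ => x⁻¹) (nhdsWithin 0 (Set.Ioi 0)) atTop :=
      tendsto_inv_nhdsGT_zero
    have h4 : Tendsto (fun τ : ℝ => 4 * τ) (nhdsWithin 0 (Set.Ioi 0))
        (nhdsWithin 0 (Set.Ioi 0)) := by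
      rw [tendsto_nhdsWithin_iff]
      refine ⟨by simpa using ((tendsto_id (x := nhdsWithin (0:ℝ) (Set.Ioi 0))).mono_right
        nhdsWithin_le_nhds).const_mul (4:ℝ), ?_⟩
      · filter_upwards [self_mem_nhdsWithin] with τ hτ
        have h : (0:ℝ) < τ := hτ
        exact Set.mem_Ioi.2 (by positivity)
    have := (hinv.comp h4).const_mul_atTop (show (0:ℝ) < r^2 from by positivity)
    have h5 := tendsto_neg_atTop_atBot.comp this
    apply h5.congr
    intro τ
    simp [Function.comp, div_eq_mul_inv, neg_mul]
  have h2 := hsqp.mul hexp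
  have h3 := (h1.sub h2).add_const (r^2/2)
  convert h3 using 2
  norm_num


lemma integrable_f (r t : ℝ) (hr : 0 < r) (ht : 0 < t) :
    IntervalIntegrable (fun τ => erf (r / (2 * Real.sqrt τ))
        - (r / Real.sqrt (π*τ)) * Real.exp (-(r^2) / (4*τ))) volume 0 t := by
  rw [intervalIntegrable_iff_integrableOn_Ioc_of_le ht.le]
  apply Measure.integrableOn_of_bounded (M := 2 + 4 * Real.sqrt t / (Real.sqrt π * r))
  · exact measure_Ioc_lt_top.ne
  · apply Measurable.aestronglyMeasurable
    apply Measurable.sub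
    · exact erf_continuous.measurable.comp
        (measurable_const.div (Real.continuous_sqrt.measurable.const_mul 2))
    · exact (measurable_const.div
          (Real.continuous_sqrt.measurable.comp (measurable_id.const_mul π))).mul
        ((measurable_const.div (measurable_id.const_mul 4)).exp)
  · filter_upwards [ae_restrict_mem measurableSet_Ioc] with τ hτ
    have hτ0 : 0 < τ := hτ.1
    have hsτ : 0 < Real.sqrt τ := Real.sqrt_pos.2 hτ0
    have hsπ : 0 < Real.sqrt π := Real.sqrt_pos.2 pi_pos
    have hx : 0 < r^2/(4*τ) := by positivity
    have hEle : Real.exp (-(r^2) / (4*τ)) ≤ 4*τ/r^2 := by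
      have h1 : r^2/(4*τ) ≤ Real.exp (r^2/(4*τ)) := by
        have := Real.add_one_le_exp (r^2/(4*τ)); linarith
      have h2 : (Real.exp (r^2/(4*τ)))⁻¹ ≤ (r^2/(4*τ))⁻¹ := by
        apply inv_anti₀ hx h1
      rw [show -(r^2) / (4*τ) = -(r^2/(4*τ)) by ring, Real.exp_neg]
      rw [show (4:ℝ)*τ/r^2 = (r^2/(4*τ))⁻¹ by field_simp]
      exact h2
    have hE0 : 0 < Real.exp (-(r^2) / (4*τ)) := Real.exp_pos _
    have hnonneg : 0 ≤ r / Real.sqrt (π*τ) := by positivity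
    have hsp : Real.sqrt (π*τ) = Real.sqrt π * Real.sqrt τ := Real.sqrt_mul pi_pos.le τ
    calc ‖erf (r / (2 * Real.sqrt τ)) - (r / Real.sqrt (π*τ)) * Real.exp (-(r^2) / (4*τ))‖
        ≤ |erf (r / (2 * Real.sqrt τ))| + |(r / Real.sqrt (π*τ)) * Real.exp (-(r^2) / (4*τ))| := by
          rw [Real.norm_eq_abs]; exact abs_sub _ _
      _ ≤ 2 + 4 * Real.sqrt t / (Real.sqrt π * r) := by
          gcongr ?_ + ?_
          · exact abs_erf_le _
          · rw [abs_of_nonneg (by positivity)]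
            calc (r / Real.sqrt (π*τ)) * Real.exp (-(r^2) / (4*τ))
                ≤ (r / Real.sqrt (π*τ)) * (4*τ/r^2) := by gcongr
              _ = 4 * Real.sqrt τ / (Real.sqrt π * r) := by
                  rw [hsp]
                  field_simp
                  linear_combination (-1) * Real.sq_sqrt hτ0.le
              _ ≤ 4 * Real.sqrt t / (Real.sqrt π * r) := by
                  have h := Real.sqrt_le_sqrt hτ.2
                  gcongr


/-- The time-varying impact of the worst-case noise source (located at the receiver),
with no flow and no molecule degradation. -/
theorem time_varying_impact_worst_case (r_obs t : ℝ) (hr : 0 < r_obs) (ht : 0 < t) :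
    ∫ τ in (0:ℝ)..t,
      (erf (r_obs / (2 * Real.sqrt τ))
        - (r_obs / Real.sqrt (π*τ)) * Real.exp (-(r_obs^2) / (4*τ)))
    = erf (r_obs / (2 * Real.sqrt t)) * (t - r_obs^2/2)
      - r_obs * Real.sqrt (t/π) * Real.exp (-(r_obs^2) / (4*t))
      + r_obs^2/2 := by
  set F : ℝ → ℝ := fun τ => erf (r_obs / (2 * Real.sqrt τ)) * (τ - r_obs^2/2)
      - r_obs * Real.sqrt (τ/π) * Real.exp (-(r_obs^2) / (4*τ)) + r_obs^2/2 with hFdef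
  set Fc : ℝ → ℝ := fun τ => if τ ≤ 0 then 0 else F τ with hFcdef
  have hFceq : ∀ τ : ℝ, 0 < τ → Fc τ = F τ := by
    intro τ hτ
    simp [hFcdef, not_le.2 hτ]
  have key : (∫ τ in (0:ℝ)..t,
      (erf (r_obs / (2 * Real.sqrt τ))
        - (r_obs / Real.sqrt (π*τ)) * Real.exp (-(r_obs^2) / (4*τ)))) = Fc t - Fc 0 := by
    apply intervalIntegral.integral_eq_sub_of_hasDeriv_right_of_le ht.le
    · -- continuity of Fc on Icc 0 t
      intro x hx
      rcases eq_or_lt_of_le hx.1 with h0 | h0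
      · -- x = 0
        subst h0
        unfold ContinuousWithinAt
        have hFc0 : Fc 0 = 0 := by simp [hFcdef]
        rw [hFc0]
        have hsub : Set.Icc (0:ℝ) t ⊆ insert 0 (Set.Ioi 0) := by
          intro y hy
          rcases eq_or_lt_of_le hy.1 with h | h
          · exact Or.inl h.symm
          · exact Or.inr h
        apply Tendsto.mono_left _ (nhdsWithin_mono _ hsub)
        rw [nhdsWithin_insert]
        apply Tendsto.sup
        · simpa [hFc0] using (tendsto_pure_nhds Fc 0).congr (fun _ => rfl)
        · exact ((tendsto_F_zero r_obs hr).congr'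
            (by filter_upwards [self_mem_nhdsWithin] with τ hτ
                exact (hFceq τ hτ).symm))
      · -- x > 0
        apply ContinuousAt.continuousWithinAt
        have hFx : ContinuousAt F x := (hasDerivAt_F r_obs hr h0).continuousAt
        apply hFx.congr
        filter_upwards [eventually_gt_nhds h0] with τ hτ
        exact (hFceq τ hτ).symm
    · -- derivative on Ioo
      intro x hx
      have hd : HasDerivAt Fc (erf (r_obs / (2 * Real.sqrt x))
          - (r_obs / Real.sqrt (π*x)) * Real.exp (-(r_obs^2) / (4*x))) x := by
        apply (hasDerivAt_F r_obs hr hx.1).congr_of_eventuallyEq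
        filter_upwards [eventually_gt_nhds hx.1] with τ hτ
        exact hFceq τ hτ
      exact hd.hasDerivWithinAt
    · exact integrable_f r_obs t hr ht
  rw [key]
  rw [hFceq t ht]
  simp [hFcdef, hFdef]
end

section
/- Fix r_obs > 0, and define f : (0, ∞) → ℝ by f(k) = 1/k − exp(−r_obs·√k)·( 1/k + r_obs/√k ). Then f is strictly decreasing on (0, ∞); that is, any increase in the degradation rate k strictly decreases the expected asymptotic number of noise molecules observed, even when the noise source is located at the center of the receiver. -/
open Real

private lemma key_exp_bound {x : ℝ} (hx : 0 < x) :
    Real.exp (-x) * (x ^ 2 + 2 * x + 2) < 2 := by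
  have h4 : (1:ℝ) + x + x ^ 2 / 2 + x ^ 3 / 6 ≤ Real.exp x := by
    have := Real.sum_le_exp_of_nonneg hx.le 4
    simpa [Finset.sum_range_succ, Nat.factorial] using this
  have hpos := Real.exp_pos x
  rw [Real.exp_neg]
  rw [inv_mul_lt_iff₀ hpos]
  nlinarith [pow_pos hx 3]

/-- Increasing the molecule degradation rate `k` strictly decreases the expected asymptotic
number of noise molecules observed, even when the noise source is at the receiver:
`f(k) = 1/k − exp(−r_obs √k)(1/k + r_obs/√k)` is strictly decreasing on `(0, ∞)`. -/
theorem worst_case_asymptotic_impact_strictAntiOn (r_obs : ℝ) (hr : 0 < r_obs)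
    (f : ℝ → ℝ)
    (hf : ∀ k ∈ Set.Ioi (0:ℝ),
      f k = 1/k - Real.exp (-(r_obs * Real.sqrt k)) * (1/k + r_obs / Real.sqrt k)) :
    StrictAntiOn f (Set.Ioi 0) := by
  set F : ℝ → ℝ := fun k =>
    1/k - Real.exp (-(r_obs * Real.sqrt k)) * (1/k + r_obs / Real.sqrt k) with hF
  -- derivative of F at k > 0
  have hderiv : ∀ k ∈ Set.Ioi (0:ℝ), ∃ D, HasDerivAt F D k ∧ D < 0 := by
    intro k hk
    have hk0 : (0:ℝ) < k := hk
    have hsk : 0 < Real.sqrt k := Real.sqrt_pos.mpr hk0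
    have hs : HasDerivAt Real.sqrt (1 / (2 * Real.sqrt k)) k :=
      Real.hasDerivAt_sqrt hk0.ne'
    have hinvk : HasDerivAt (fun k : ℝ => 1 / k) (-(1/k^2)) k := by
      simpa [one_div] using hasDerivAt_inv hk0.ne'
    have he : HasDerivAt (fun k : ℝ => Real.exp (-(r_obs * Real.sqrt k)))
        (Real.exp (-(r_obs * Real.sqrt k)) * (-(r_obs * (1 / (2 * Real.sqrt k))))) k :=
      ((hs.const_mul r_obs).neg).exp
    have hi : HasDerivAt (fun k : ℝ => r_obs / Real.sqrt k)
        (r_obs * (-(1 / (2 * Real.sqrt k)) / (Real.sqrt k) ^ 2)) k := by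
      simpa [div_eq_mul_inv] using (hs.inv hsk.ne').const_mul r_obs
    refine ⟨_, hinvk.sub (he.mul (hinvk.add hi)), ?_⟩
    -- show the derivative is negative
    have hx := key_exp_bound (mul_pos hr hsk)
    have hsq : Real.sqrt k ^ 2 = k := Real.sq_sqrt hk0.le
    have hepos := Real.exp_pos (-(r_obs * Real.sqrt k))
    set E := Real.exp (-(r_obs * Real.sqrt k)) with hE
    have h1 : -(1/k^2) - (E * (-(r_obs * (1 / (2 * Real.sqrt k)))) * (1/k + r_obs / Real.sqrt k)
        + E * (-(1/k^2) + r_obs * (-(1 / (2 * Real.sqrt k)) / (Real.sqrt k) ^ 2)))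
        = (E * ((r_obs * Real.sqrt k) ^ 2 + 2 * (r_obs * Real.sqrt k) + 2) - 2) / (2 * k ^ 2) := by
      rw [← hsq]
      field_simp
      rw [Real.sqrt_sq hsk.le]
      ring
    rw [h1]
    apply div_neg_of_neg_of_pos
    · linarith
    · positivity
  have hcont : ContinuousOn F (Set.Ioi 0) := fun x hx => by
    obtain ⟨D, hD, _⟩ := hderiv x hx
    exact hD.continuousAt.continuousWithinAt
  have hFanti : StrictAntiOn F (Set.Ioi 0) := by
    apply strictAntiOn_of_deriv_neg (convex_Ioi 0) hcont
    intro x hx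
    rw [interior_Ioi] at hx
    obtain ⟨D, hD, hDneg⟩ := hderiv x hx
    rwa [hD.deriv]
  intro a ha b hb hab
  rw [hf a ha, hf b hb]
  exact hFanti ha hb hab
end

section
/- Fix p₀ ∈ ℝ³, v ∈ ℝ³, and k ≥ 0, and define C : (0, ∞) × ℝ³ → ℝ by C(t, p) = (4πt)^{−3/2} · exp( −‖p − p₀ − t·v‖² / (4t) − k·t ). Then C satisfies the advection–reaction–diffusion equation ∂C/∂t (t, p) = ΔC(t, p) − ⟪v, ∇C(t, p)⟫ − k·C(t, p) for all t > 0 and p ∈ ℝ³, where Δ is the spatial Laplacian, ∇ the spatial gradient, and ⟪·,·⟫ the Euclidean inner product. -/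
open Real MeasureTheory

lemma aux_hasFDerivAt (t k A : ℝ) (ht : 0 < t) (c q : EuclideanSpace ℝ (Fin 3)) :
    HasFDerivAt (fun p : EuclideanSpace ℝ (Fin 3) =>
        A * Real.exp (-‖p - c‖^2 / (4*t) - k*t))
      ((-(A * Real.exp (-‖q - c‖^2 / (4*t) - k*t)) / (2*t)) • innerSL ℝ (q - c)) q := by
  have h1 : HasFDerivAt (fun p : EuclideanSpace ℝ (Fin 3) => p - c)
      (ContinuousLinearMap.id ℝ _) q := (hasFDerivAt_id q).sub_const c
  have h2 := h1.norm_sq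
  have h3 := (h2.const_mul (-(4*t)⁻¹)).sub_const (k*t)
  have h4 := h3.exp.const_mul A
  have hfun : (fun p : EuclideanSpace ℝ (Fin 3) =>
      A * Real.exp (-‖p - c‖^2 / (4*t) - k*t))
      = fun p => A * Real.exp (-(4*t)⁻¹ * ‖p - c‖^2 - k*t) := by
    funext p
    rw [neg_div, div_eq_inv_mul, ← neg_mul]
  rw [hfun]
  refine h4.congr_fderiv ?_
  ext y
  have ht' : (2:ℝ)*t ≠ 0 := by positivity
  have ht4 : (4:ℝ)*t ≠ 0 := by positivity
  simp only [ContinuousLinearMap.smul_apply, ContinuousLinearMap.coe_comp',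
    Function.comp_apply, ContinuousLinearMap.coe_id', id_eq, innerSL_apply_apply,
    smul_eq_mul, ContinuousLinearMap.smul_apply, two_smul, ContinuousLinearMap.add_apply]
  have : -(4*t)⁻¹ * ‖q - c‖^2 - k*t = -‖q - c‖^2 / (4*t) - k*t := by
    rw [neg_div, div_eq_inv_mul, ← neg_mul]
  rw [this]
  field_simp
  ring

lemma aux_fst (t k A : ℝ) (ht : 0 < t) (c q : EuclideanSpace ℝ (Fin 3)) (i : Fin 3) :
    fderiv ℝ (fun p : EuclideanSpace ℝ (Fin 3) =>
        A * Real.exp (-‖p - c‖^2 / (4*t) - k*t)) q (EuclideanSpace.single i 1)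
      = (-(A * Real.exp (-‖q - c‖^2 / (4*t) - k*t)) / (2*t)) * (q i - c i) := by
  rw [(aux_hasFDerivAt t k A ht c q).fderiv]
  simp [EuclideanSpace.inner_single_right, real_inner_comm]

lemma aux_snd (t k A : ℝ) (ht : 0 < t) (c p : EuclideanSpace ℝ (Fin 3)) (i : Fin 3) :
    fderiv ℝ (fun q : EuclideanSpace ℝ (Fin 3) =>
        fderiv ℝ (fun r : EuclideanSpace ℝ (Fin 3) =>
          A * Real.exp (-‖r - c‖^2 / (4*t) - k*t)) q (EuclideanSpace.single i 1))
        p (EuclideanSpace.single i 1)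
      = (A * Real.exp (-‖p - c‖^2 / (4*t) - k*t)) *
          ((p i - c i)^2 / (4*t^2) - 1/(2*t)) := by
  have hfun : (fun q : EuclideanSpace ℝ (Fin 3) =>
      fderiv ℝ (fun r : EuclideanSpace ℝ (Fin 3) =>
        A * Real.exp (-‖r - c‖^2 / (4*t) - k*t)) q (EuclideanSpace.single i 1))
      = fun q => (-(2*t)⁻¹ * (A * Real.exp (-‖q - c‖^2 / (4*t) - k*t))) * (q i - c i) := by
    funext q
    rw [aux_fst t k A ht c q i]
    ring
  rw [hfun]
  have hG := aux_hasFDerivAt t k A ht c p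
  have hproj : HasFDerivAt (fun q : EuclideanSpace ℝ (Fin 3) => q i - c i)
      (EuclideanSpace.proj (𝕜 := ℝ) i) p :=
    ((EuclideanSpace.proj (𝕜 := ℝ) i).hasFDerivAt).sub_const (c i)
  have hmul := (hG.const_mul (-(2*t)⁻¹)).mul hproj
  erw [hmul.fderiv]
  have ht' : (2:ℝ)*t ≠ 0 := by positivity
  simp only [ContinuousLinearMap.add_apply, ContinuousLinearMap.smul_apply,
    ContinuousLinearMap.coe_smul', Pi.smul_apply, innerSL_apply_apply, smul_eq_mul]
  rw [EuclideanSpace.inner_single_right]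
  simp only [PiLp.proj_apply, EuclideanSpace.single_apply, if_pos rfl,
    map_one, one_mul, PiLp.sub_apply, if_true, conj_trivial]
  field_simp
  ring

lemma aux_grad (t k A : ℝ) (ht : 0 < t) (c p : EuclideanSpace ℝ (Fin 3)) :
    gradient (fun q : EuclideanSpace ℝ (Fin 3) =>
        A * Real.exp (-‖q - c‖^2 / (4*t) - k*t)) p
      = (-(A * Real.exp (-‖p - c‖^2 / (4*t) - k*t)) / (2*t)) • (p - c) := by
  apply HasGradientAt.gradient
  rw [hasGradientAt_iff_hasFDerivAt]
  refine (aux_hasFDerivAt t k A ht c p).congr_fderiv ?_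
  ext y
  simp [InnerProductSpace.toDual_apply_apply, inner_smul_left]

lemma aux_time (t k : ℝ) (ht : 0 < t) (a v : EuclideanSpace ℝ (Fin 3)) :
    HasDerivAt (fun s : ℝ => (4*π*s) ^ (-(3:ℝ)/2) * Real.exp (-‖a - s • v‖^2 / (4*s) - k*s))
      ((-(3:ℝ)/2 * (4*π*t)^(-(3:ℝ)/2 - 1) * (4*π)) * Real.exp (-‖a - t • v‖^2 / (4*t) - k*t)
        + (4*π*t) ^ (-(3:ℝ)/2) * (Real.exp (-‖a - t • v‖^2 / (4*t) - k*t) *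
            ((-(2 * (inner ℝ (a - t • v) (-v) : ℝ)) * (4*t) - (-‖a - t • v‖^2) * 4) / (4*t)^2
              - k))) t := by
  have h0 : (4*π*t) ≠ 0 := by positivity
  have hlin : HasDerivAt (fun s : ℝ => 4*π*s) (4*π) t := by
    simpa using (hasDerivAt_id t).const_mul (4*π)
  have hA := (Real.hasDerivAt_rpow_const (p := -(3:ℝ)/2) (Or.inl h0)).comp t hlin
  have hv : HasDerivAt (fun s : ℝ => a - s • v) (-v) t := by
    simpa using ((hasDerivAt_id t).smul_const v).const_sub a
  have hQ := hv.norm_sq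
  have h4s : HasDerivAt (fun s : ℝ => 4*s) 4 t := by
    simpa using (hasDerivAt_id t).const_mul 4
  have h4ne : (4:ℝ)*t ≠ 0 := by positivity
  have hdiv := (hQ.neg.div h4s h4ne)
  have hks : HasDerivAt (fun s : ℝ => k*s) k t := by
    simpa using (hasDerivAt_id t).const_mul k
  have hexp := (hdiv.sub hks).exp
  have := hA.mul hexp
  exact this

/-- The channel impulse response
`C(t,p) = (4πt)^{−3/2} exp(−‖p − p₀ − t v‖²/(4t) − kt)` satisfies the
advection–reaction–diffusion equation `∂C/∂t = ΔC − ⟪v, ∇C⟫ − kC` for `t > 0`,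
where `ΔC` is expressed as the sum of the second partial derivatives along the
coordinate directions of `ℝ³`. -/
theorem channel_impulse_response_satisfies_advection_reaction_diffusion
    (p₀ v : EuclideanSpace ℝ (Fin 3)) (k : ℝ) (hk : 0 ≤ k)
    (C : ℝ → EuclideanSpace ℝ (Fin 3) → ℝ)
    (hC : ∀ t p, C t p =
      (4*π*t) ^ (-(3:ℝ)/2) * Real.exp (-‖p - p₀ - t • v‖^2 / (4*t) - k*t)) :
    ∀ t : ℝ, 0 < t → ∀ p : EuclideanSpace ℝ (Fin 3),
      deriv (fun s => C s p) t =
        (∑ i : Fin 3,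
          fderiv ℝ (fun q => fderiv ℝ (C t) q (EuclideanSpace.single i 1)) p
            (EuclideanSpace.single i 1))
        - (inner ℝ v (gradient (C t) p) : ℝ)
        - k * C t p := by
  intro t ht p
  have hπ := Real.pi_pos
  set A : ℝ := (4*π*t) ^ (-(3:ℝ)/2) with hA
  set c : EuclideanSpace ℝ (Fin 3) := p₀ + t • v with hc
  have hpc : p - p₀ - t • v = p - c := by rw [hc, sub_sub]
  have hCt : C t = fun q : EuclideanSpace ℝ (Fin 3) =>
      A * Real.exp (-‖q - c‖^2 / (4*t) - k*t) := by
    funext q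
    rw [hC t q, hc, sub_sub]
  have htfun : (fun s => C s p)
      = fun s : ℝ => (4*π*s) ^ (-(3:ℝ)/2) *
          Real.exp (-‖(p - p₀) - s • v‖^2 / (4*s) - k*s) := by
    funext s; exact hC s p
  have hpc' : (p - p₀) - t • v = p - c := hpc
  have hLHS : deriv (fun s => C s p) t =
      (-(3:ℝ)/2 * (4*π*t)^(-(3:ℝ)/2 - 1) * (4*π)) * Real.exp (-‖p - c‖^2 / (4*t) - k*t)
        + A * (Real.exp (-‖p - c‖^2 / (4*t) - k*t) *
            ((-(2 * (inner ℝ (p - c) (-v) : ℝ)) * (4*t) - (-‖p - c‖^2) * 4) / (4*t)^2 - k)) := by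
    rw [htfun, (aux_time t k ht (p - p₀) v).deriv, hpc']
  rw [hLHS, hCt]
  beta_reduce
  rw [Finset.sum_congr rfl (fun i _ => aux_snd t k A ht c p i)]
  rw [aux_grad t k A ht c p, real_inner_smul_right]
  set e : ℝ := Real.exp (-‖p - c‖^2 / (4*t) - k*t) with he
  have hrpow : (4*π*t)^(-(3:ℝ)/2 - 1) = A / (4*π*t) := by
    rw [Real.rpow_sub (by positivity), Real.rpow_one, hA]
  have hN : ‖p - c‖^2 = ∑ i : Fin 3, (p i - c i)^2 := by
    rw [EuclideanSpace.norm_eq, Real.sq_sqrt (by positivity)]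
    simp [sq_abs]
  have hinner : (inner ℝ (p - c) (-v) : ℝ) = -(inner ℝ v (p - c) : ℝ) := by
    rw [inner_neg_right, real_inner_comm]
  rw [hrpow, hinner, hN, Fin.sum_univ_three, Fin.sum_univ_three]
  have h4πt : (4:ℝ)*π*t ≠ 0 := by positivity
  have ht0 : t ≠ 0 := ne_of_gt ht
  generalize (inner ℝ v (p - c) : ℝ) = I
  generalize (p 0 - c 0 : ℝ) = d0
  generalize (p 1 - c 1 : ℝ) = d1
  generalize (p 2 - c 2 : ℝ) = d2
  clear_value A e
  field_simp
  ring
end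

section
/- For every a < 0 and every k > 0, one has ∫₀^∞ erf( a/√τ ) · exp(−k·τ) dτ = (1/k)·( exp(2a·√k) − 1 ). -/
open Real MeasureTheory

section GlasserAux
open Set

lemma glasser_aux (c : ℝ) (hc : 0 < c) :
    ∫ x in Ioi (0:ℝ), Real.exp (-(x - c/x)^2)
      = ∫ x in Ioi (0:ℝ), (c/x^2) * Real.exp (-(x - c/x)^2) := by
  have himg : (fun x => c/x) '' Ioi (0:ℝ) = Ioi 0 := by
    ext y
    constructor
    · rintro ⟨x, hx, rfl⟩
      exact div_pos hc hx
    · intro hy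
      exact ⟨c/y, div_pos hc hy, by field_simp⟩
  have := integral_image_eq_integral_abs_deriv_smul (measurableSet_Ioi)
    (f := fun x => c/x) (f' := fun x => -(c/x^2))
    (fun x hx => by
      have hx0 : x ≠ 0 := ne_of_gt hx
      simpa [div_eq_mul_inv, mul_comm] using
        ((hasDerivAt_inv hx0).const_mul c).hasDerivWithinAt)
    (fun x hx y hy hxy => by
      have hx0 : x ≠ 0 := ne_of_gt hx
      have hy0 : y ≠ 0 := ne_of_gt hy
      field_simp at hxy
      exact hxy.symm)
    (fun x => Real.exp (-(x - c/x)^2))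
  rw [himg] at this
  rw [this]
  apply setIntegral_congr_fun measurableSet_Ioi
  intro x hx
  have hx0 : (0:ℝ) < x := hx
  have h1 : |(-(c/x^2))| = c/x^2 := by
    rw [abs_neg, abs_of_pos (div_pos hc (pow_pos hx0 2))]
  have h2 : c / x / (c / x) * x = x := by field_simp
  simp only [smul_eq_mul]
  rw [h1]
  congr 2
  have : c / x - c / (c / x) = -(x - c/x) := by
    have hx0' : x ≠ 0 := ne_of_gt hx0
    have hc0 : c ≠ 0 := ne_of_gt hc
    field_simp
    ring
  rw [this, neg_sq]

lemma glasser_sum (c : ℝ) (hc : 0 < c) :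
    (∫ x in Ioi (0:ℝ), (1 + c/x^2) * Real.exp (-(x - c/x)^2) = Real.sqrt π)
    ∧ IntegrableOn (fun x => (1 + c/x^2) * Real.exp (-(x - c/x)^2)) (Ioi (0:ℝ)) := by
  have hderiv : ∀ x ∈ Ioi (0:ℝ), HasDerivWithinAt (fun x => x - c/x) (1 + c/x^2) (Ioi 0) x := by
    intro x hx
    have hx0 : x ≠ 0 := ne_of_gt hx
    have : HasDerivAt (fun x => x - c/x) (1 - c * (-(x^2)⁻¹)) x := by
      simpa [div_eq_mul_inv] using (hasDerivAt_id' x).fun_sub ((hasDerivAt_inv hx0).const_mul c)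
    have he : 1 - c * (-(x^2)⁻¹) = 1 + c/x^2 := by field_simp; ring
    exact (he ▸ this).hasDerivWithinAt
  have hinj : InjOn (fun x => x - c/x) (Ioi (0:ℝ)) := by
    have : StrictMonoOn (fun x => x - c/x) (Ioi (0:ℝ)) := by
      intro x hx y hy hxy
      have : c / y < c / x := div_lt_div_of_pos_left hc hx hxy
      simp only
      linarith
    exact this.injOn
  have himg : (fun x => x - c/x) '' Ioi (0:ℝ) = univ := by
    apply eq_univ_of_forall
    intro y
    set s := Real.sqrt (y^2 + 4*c) with hs
    have hs2 : s^2 = y^2 + 4*c := Real.sq_sqrt (by positivity)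
    have hsy : -y < s := by
      rcases le_or_gt y 0 with h | h
      · have : Real.sqrt (y^2) < s := by
          apply Real.sqrt_lt_sqrt (by positivity); linarith
        rw [Real.sqrt_sq_eq_abs] at this
        calc -y ≤ |y| := neg_le_abs y
        _ < s := this
      · have : (0:ℝ) ≤ s := Real.sqrt_nonneg _
        linarith
    have hx0 : 0 < (y + s)/2 := by linarith
    refine ⟨(y+s)/2, hx0, ?_⟩
    have h0 : (y+s)/2 ≠ 0 := ne_of_gt hx0
    have h1 : c / ((y+s)/2) = (s - y)/2 := by
      rw [div_eq_iff h0]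
      nlinarith [hs2]
    show (y+s)/2 - c/((y+s)/2) = y
    rw [h1]; ring
  have hgauss : Integrable (fun u : ℝ => Real.exp (-u^2)) := by
    simpa using integrable_exp_neg_mul_sq (one_pos)
  have hint := (integrableOn_image_iff_integrableOn_abs_deriv_smul measurableSet_Ioi
      hderiv hinj (fun u => Real.exp (-u^2)))
  rw [himg] at hint
  have habs : ∀ x ∈ Ioi (0:ℝ),
      |1 + c/x^2| • Real.exp (-(x - c/x)^2) = (1 + c/x^2) * Real.exp (-(x - c/x)^2) := by
    intro x hx
    have : (0:ℝ) < 1 + c/x^2 := by positivity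
    rw [smul_eq_mul, abs_of_pos this]
  constructor
  · have := integral_image_eq_integral_abs_deriv_smul measurableSet_Ioi hderiv hinj
      (fun u => Real.exp (-u^2))
    rw [himg] at this
    rw [← setIntegral_congr_fun measurableSet_Ioi habs, ← this,
      Measure.restrict_univ]
    rw [show Real.sqrt π = Real.sqrt (π/1) by norm_num]
    rw [← integral_gaussian 1]
    congr 1; ext u; norm_num
  · exact (integrableOn_congr_fun habs measurableSet_Ioi).1 (hint.1 hgauss.integrableOn)

lemma glasser (c : ℝ) (hc : 0 < c) :
    ∫ x in Ioi (0:ℝ), Real.exp (-(x^2 + c^2/x^2)) = Real.sqrt π / 2 * Real.exp (-(2*c)) := by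
  obtain ⟨hsum, hintsum⟩ := glasser_sum c hc
  have hE : IntegrableOn (fun x => Real.exp (-(x - c/x)^2)) (Ioi (0:ℝ)) := by
    apply Integrable.mono (((integrable_exp_neg_mul_sq one_pos).integrableOn).const_mul
      (Real.exp (2*c)))
    · refine Measurable.aestronglyMeasurable ?_
      apply Real.measurable_exp.comp
      exact ((measurable_id.sub (measurable_const.div measurable_id)).pow_const 2).neg
    · filter_upwards [ae_restrict_mem measurableSet_Ioi] with x hx
      have hx0 : (0:ℝ) < x := hx
      rw [Real.norm_eq_abs, Real.norm_eq_abs, abs_of_pos (by positivity),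
        abs_of_pos (by positivity), ← Real.exp_add]
      apply Real.exp_le_exp.2
      have hxc : x * (c/x) = c := by field_simp
      nlinarith [sq_nonneg (c/x), sq_nonneg (x - c/x)]
  have hCE : IntegrableOn (fun x => (c/x^2) * Real.exp (-(x - c/x)^2)) (Ioi (0:ℝ)) := by
    refine (integrableOn_congr_fun (fun x hx => ?_) measurableSet_Ioi).1 (hintsum.sub hE)
    simp only [Pi.sub_apply]; ring
  have hsplit : ∫ x in Ioi (0:ℝ), (1 + c/x^2) * Real.exp (-(x - c/x)^2)
      = (∫ x in Ioi (0:ℝ), Real.exp (-(x - c/x)^2))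
        + ∫ x in Ioi (0:ℝ), (c/x^2) * Real.exp (-(x - c/x)^2) := by
    rw [← integral_add hE hCE]
    apply setIntegral_congr_fun measurableSet_Ioi
    intro x hx; simp only; ring
  have hhalf : ∫ x in Ioi (0:ℝ), Real.exp (-(x - c/x)^2) = Real.sqrt π / 2 := by
    have := glasser_aux c hc
    rw [hsplit, ← this] at hsum
    linarith
  calc ∫ x in Ioi (0:ℝ), Real.exp (-(x^2 + c^2/x^2))
      = ∫ x in Ioi (0:ℝ), Real.exp (-(x - c/x)^2) * Real.exp (-(2*c)) := by
        apply setIntegral_congr_fun measurableSet_Ioi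
        intro x hx
        have hx0 : x ≠ 0 := ne_of_gt hx
        simp only [← Real.exp_add]
        congr 1
        field_simp
        ring
    _ = Real.sqrt π / 2 * Real.exp (-(2*c)) := by rw [integral_mul_const, hhalf]

end GlasserAux

open Set in
/-- `∫₀^∞ erf(a/√τ) exp(−kτ) dτ = (1/k)(exp(2a√k) − 1)` for `a < 0`, `k > 0`. -/
theorem integral_erf_exp_neg (a k : ℝ) (ha : a < 0) (hk : 0 < k) :
    ∫ τ in Set.Ioi (0:ℝ), erf (a / Real.sqrt τ) * Real.exp (-(k*τ))
    = (1/k) * (Real.exp (2*a*Real.sqrt k) - 1) := by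
  have hπ : (0:ℝ) < Real.sqrt π := Real.sqrt_pos.2 Real.pi_pos
  set g : ℝ × ℝ → ℝ := fun p => Real.exp (-(k * p.1)) * Real.exp (-p.2^2) with hg
  set S : Set (ℝ × ℝ) := {p | a / Real.sqrt p.1 < p.2 ∧ p.2 < 0} with hS
  have hSm : MeasurableSet S := by
    rw [hS, setOf_and]
    exact (measurableSet_lt (measurable_const.div
          (Real.continuous_sqrt.measurable.comp measurable_fst)) measurable_snd).inter
      (measurableSet_lt measurable_snd measurable_const)
  have hgauss : Integrable (fun b : ℝ => Real.exp (-b^2)) := by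
    simpa using integrable_exp_neg_mul_sq one_pos
  have hgint : Integrable g ((volume.restrict (Ioi 0)).prod volume) := by
    have h1 : Integrable (fun τ => Real.exp (-(k*τ))) (volume.restrict (Ioi 0)) := by
      exact (by simpa [neg_mul] using exp_neg_integrableOn_Ioi 0 hk : IntegrableOn (fun τ => Real.exp (-(k*τ))) (Ioi 0))
    exact h1.mul_prod hgauss
  have hFint : Integrable (Function.uncurry fun τ b => S.indicator g (τ, b))
      ((volume.restrict (Ioi 0)).prod volume) := by
    exact hgint.indicator hSm
  have hswap := integral_integral_swap hFint
  -- LHS computation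
  have hL : ∫ τ in Ioi (0:ℝ), erf (a / Real.sqrt τ) * Real.exp (-(k*τ))
      = -(2 / Real.sqrt π) * ∫ τ in Ioi (0:ℝ), ∫ b, S.indicator g (τ, b) := by
    rw [← integral_const_mul]
    apply setIntegral_congr_fun measurableSet_Ioi
    intro τ hτ
    have hτ0 : (0:ℝ) < τ := hτ
    have hsτ : 0 < Real.sqrt τ := Real.sqrt_pos.2 hτ0
    have hq : a / Real.sqrt τ < 0 := div_neg_of_neg_of_pos ha hsτ
    have hind : ∀ b : ℝ, S.indicator g (τ, b)
        = (Ioo (a / Real.sqrt τ) 0).indicator (fun b => Real.exp (-(k*τ)) * Real.exp (-b^2)) b := by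
      intro b
      simp [Set.indicator_apply, hS, hg, Set.mem_Ioo, Set.mem_setOf_eq]
    have hbint : (∫ b, S.indicator g (τ, b))
        = Real.exp (-(k*τ)) * ∫ b in Ioo (a / Real.sqrt τ) 0, Real.exp (-b^2) := by
      simp_rw [hind]
      rw [integral_indicator measurableSet_Ioo, ← integral_const_mul]
    have herf : erf (a / Real.sqrt τ)
        = -(2 / Real.sqrt π) * ∫ b in Ioo (a / Real.sqrt τ) 0, Real.exp (-b^2) := by
      rw [erf, intervalIntegral.integral_symm,
        intervalIntegral.integral_of_le (le_of_lt hq), integral_Ioc_eq_integral_Ioo]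
      ring
    simp only [hbint, herf]
    ring
  -- RHS computation
  set c : ℝ := (-a) * Real.sqrt k with hc
  have hc0 : 0 < c := mul_pos (neg_pos.2 ha) (Real.sqrt_pos.2 hk)
  have hcsq : c^2 = a^2 * k := by
    rw [hc, mul_pow, neg_pow, Real.sq_sqrt hk.le]
    ring
  have hR : (∫ b, ∫ τ in Ioi (0:ℝ), S.indicator g (τ, b))
      = (1/k) * (Real.sqrt π / 2) * (1 - Real.exp (2*a*Real.sqrt k)) := by
    have hinner : ∀ b : ℝ, (∫ τ in Ioi (0:ℝ), S.indicator g (τ, b))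
        = (Iio (0:ℝ)).indicator
            (fun b => Real.exp (-b^2) * ((1 - Real.exp (-(k*(a/b)^2)))/k)) b := by
      intro b
      by_cases hb : b < 0
      · have hab : 0 < a / b := by
          have := div_pos (neg_pos.2 ha) (neg_pos.2 hb)
          rwa [neg_div_neg_eq] at this
        set T : ℝ := (a/b)^2 with hT
        have hT0 : 0 < T := by positivity
        have h1 : (∫ τ in Ioi (0:ℝ), S.indicator g (τ, b))
            = ∫ τ in Ioi (0:ℝ),
                (Iio T).indicator (fun τ => Real.exp (-(k*τ)) * Real.exp (-b^2)) τ := by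
          apply setIntegral_congr_fun measurableSet_Ioi
          intro τ hτ
          have hτ0 : (0:ℝ) < τ := hτ
          have hsτ : 0 < Real.sqrt τ := Real.sqrt_pos.2 hτ0
          have hiff : (τ, b) ∈ S ↔ τ ∈ Iio T := by
            simp only [hS, mem_setOf_eq, mem_Iio]
            constructor
            · rintro ⟨h1, _⟩
              rw [div_lt_iff₀ hsτ, mul_comm] at h1
              have h2 : Real.sqrt τ < a / b := (lt_div_iff_of_neg hb).2 h1
              exact (Real.sqrt_lt' hab).1 h2
            · intro h1
              refine ⟨?_, hb⟩
              have h2 : Real.sqrt τ < a / b := (Real.sqrt_lt' hab).2 h1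
              have h3 : a < Real.sqrt τ * b := (lt_div_iff_of_neg hb).1 h2
              rw [div_lt_iff₀ hsτ, mul_comm]
              exact h3
          simp only [Set.indicator_apply, hiff]
          rfl
        have h2 : ∫ τ in Ioo (0:ℝ) T, Real.exp (-(k*τ))
            = (1 - Real.exp (-(k*T)))/k := by
          rw [← integral_Ioc_eq_integral_Ioo,
            ← intervalIntegral.integral_of_le hT0.le]
          have hd : ∀ x ∈ Set.uIcc (0:ℝ) T, HasDerivAt (fun x => -(Real.exp (-(k*x))/k))
              (Real.exp (-(k*x))) x := by
            intro x _
            have : HasDerivAt (fun x => Real.exp (-(k*x))) (Real.exp (-(k*x)) * (-k)) x := by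
              simpa using (((hasDerivAt_id x).const_mul k).neg).exp
            have : HasDerivAt (fun x => -(Real.exp (-(k*x))/k)) (-(Real.exp (-(k*x)) * (-k) / k)) x :=
              (this.div_const k).fun_neg
            convert this using 1
            field_simp [hk.ne']
          rw [intervalIntegral.integral_eq_sub_of_hasDerivAt hd
            ((Real.continuous_exp.comp ((continuous_const.mul continuous_id).neg)).intervalIntegrable 0 T)]
          simp [Real.exp_zero]
          field_simp
          ring
        rw [h1, setIntegral_indicator measurableSet_Iio, Set.Ioi_inter_Iio]
        rw [integral_mul_const, h2]
        simp only [Set.indicator_of_mem (mem_Iio.2 hb)]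
        ring
      · have hz : ∀ τ : ℝ, S.indicator g (τ, b) = 0 := by
          intro τ
          apply Set.indicator_of_notMem
          rw [hS, mem_setOf_eq]
          push_neg
          intro _
          linarith [not_lt.1 hb]
        simp only [hz, integral_zero]
        rw [Set.indicator_of_notMem (by simpa using not_lt.1 hb)]
    simp_rw [hinner]
    rw [integral_indicator measurableSet_Iio]
    rw [← integral_Iic_eq_integral_Iio, show Iic (0:ℝ) = Iic (-0) by norm_num,
      ← integral_comp_neg_Ioi]
    have hrefl : ∀ x ∈ Ioi (0:ℝ),
        Real.exp (-(-x)^2) * ((1 - Real.exp (-(k*(a/(-x))^2)))/k)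
        = (1/k) * Real.exp (-x^2) - (1/k) * Real.exp (-(x^2 + c^2/x^2)) := by
      intro x hx
      have hx0 : x ≠ 0 := ne_of_gt hx
      have e1 : ((-x):ℝ)^2 = x^2 := by ring
      have e2 : (a/(-x))^2 = (a/x)^2 := by ring
      have e3 : k * (a/x)^2 = c^2/x^2 := by
        rw [hcsq]; field_simp
      have e4 : Real.exp (-(x^2 + c^2/x^2)) = Real.exp (-x^2) * Real.exp (-(c^2/x^2)) := by
        rw [← Real.exp_add]; ring_nf
      rw [e1, e2, e3, e4]
      field_simp
    rw [setIntegral_congr_fun measurableSet_Ioi hrefl]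
    have hI1 : IntegrableOn (fun x => (1/k) * Real.exp (-x^2)) (Ioi (0:ℝ)) :=
      (hgauss.integrableOn).const_mul _
    have hI2 : IntegrableOn (fun x => (1/k) * Real.exp (-(x^2 + c^2/x^2))) (Ioi (0:ℝ)) := by
      apply Integrable.mono hI1
      · refine Measurable.aestronglyMeasurable ?_
        apply (Real.measurable_exp.comp ?_).const_mul
        exact ((measurable_id.pow_const 2).add
          ((measurable_const.div (measurable_id.pow_const 2)))).neg
      · filter_upwards [ae_restrict_mem measurableSet_Ioi] with x hx
        have hx0 : (0:ℝ) < x := hx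
        rw [Real.norm_eq_abs, Real.norm_eq_abs, abs_of_pos (by positivity),
          abs_of_pos (by positivity)]
        have : Real.exp (-(x^2 + c^2/x^2)) ≤ Real.exp (-x^2) := by
          apply Real.exp_le_exp.2
          have : 0 ≤ c^2/x^2 := by positivity
          linarith
        have hk1 : 0 ≤ 1/k := by positivity
        exact mul_le_mul_of_nonneg_left this hk1
    rw [integral_sub hI1 hI2, integral_const_mul, integral_const_mul, glasser c hc0]
    have hI3 : ∫ x in Ioi (0:ℝ), Real.exp (-x^2) = Real.sqrt π / 2 := by
      have := integral_gaussian_Ioi 1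
      simp only [neg_mul, one_mul] at this
      rw [this]
      norm_num
    rw [hI3]
    have : -(2*c) = 2*a*Real.sqrt k := by rw [hc]; ring
    rw [this]
    ring
  rw [hL, hswap, hR]
  field_simp
  ring
end

section
/- For all b₁ > 0 and b₂ > 0, one has ∫₀^∞ erf( b₁·c ) · exp( −b₂²/(4c²) ) · c^{−3} dc = (2/b₂²)·( 1 − exp(−b₁·b₂) ). -/
set_option maxHeartbeats 1000000

open Real MeasureTheory

section Aux
open Set

lemma my_measurable_g (m : ℝ) : Measurable fun y : ℝ => Real.exp (-(y^2) - m^2 / y^2) := by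
  apply Real.measurable_exp.comp
  exact ((measurable_id.pow_const 2).neg).sub (measurable_const.div (measurable_id.pow_const 2))

lemma my_integrable_g (m : ℝ) :
    IntegrableOn (fun y : ℝ => Real.exp (-(y^2) - m^2 / y^2)) (Set.Ioi 0) := by
  have hint : IntegrableOn (fun y : ℝ => Real.exp (-(1:ℝ) * y^2)) (Set.Ioi 0) :=
    (integrable_exp_neg_mul_sq one_pos).integrableOn
  refine MeasureTheory.Integrable.mono hint (my_measurable_g m).aestronglyMeasurable ?_
  filter_upwards with y
  rw [Real.norm_eq_abs, Real.norm_eq_abs, abs_of_pos (Real.exp_pos _), abs_of_pos (Real.exp_pos _)]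
  apply Real.exp_le_exp.2
  have : 0 ≤ m^2 / y^2 := by positivity
  nlinarith

lemma my_inv_image (m : ℝ) (hm : 0 < m) : (fun y : ℝ => m / y) '' Set.Ioi 0 = Set.Ioi 0 := by
  ext u
  constructor
  · rintro ⟨y, hy, rfl⟩
    exact div_pos hm hy
  · intro hu
    exact ⟨m / u, div_pos hm hu, by field_simp⟩

lemma my_inv_deriv (m : ℝ) : ∀ y ∈ Set.Ioi (0:ℝ),
    HasDerivWithinAt (fun y : ℝ => m / y) (-(m / y^2)) (Set.Ioi 0) y := by
  intro y hy
  have h := ((hasDerivAt_inv (ne_of_gt hy)).const_mul m).hasDerivWithinAt (s := Set.Ioi 0)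
  simp only [div_eq_mul_inv]
  convert h using 1
  have : (y:ℝ) ≠ 0 := ne_of_gt hy
  · rfl
  · rfl
  · ring

lemma my_inv_inj (m : ℝ) (hm : 0 < m) : Set.InjOn (fun y : ℝ => m / y) (Set.Ioi 0) := by
  intro a ha b hb hab
  simp only at hab
  have ha' : (a:ℝ) ≠ 0 := ne_of_gt ha
  have hb' : (b:ℝ) ≠ 0 := ne_of_gt hb
  field_simp at hab
  exact hab.symm

lemma my_my_integrable_g2 (m : ℝ) (hm : 0 < m) :
    IntegrableOn (fun y : ℝ => (m / y^2) * Real.exp (-(y^2) - m^2 / y^2)) (Set.Ioi 0) := by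
  have key := MeasureTheory.integrableOn_image_iff_integrableOn_abs_deriv_smul
    (measurableSet_Ioi) (my_inv_deriv m) (my_inv_inj m hm)
    (fun y => Real.exp (-(y^2) - m^2 / y^2))
  rw [my_inv_image m hm] at key
  have h := key.1 (my_integrable_g m)
  refine h.congr_fun ?_ measurableSet_Ioi
  intro y hy
  have hy' : (y:ℝ) ≠ 0 := ne_of_gt hy
  have h1 : |-(m / y^2)| = m / y^2 := by rw [abs_neg, abs_of_pos (by positivity)]
  simp only [smul_eq_mul, h1]
  congr 2
  field_simp
  ring

lemma my_my_glasser_AB (m : ℝ) (hm : 0 < m) :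
    ∫ y in Set.Ioi (0:ℝ), Real.exp (-(y^2) - m^2 / y^2)
      = ∫ y in Set.Ioi (0:ℝ), (m / y^2) * Real.exp (-(y^2) - m^2 / y^2) := by
  have key := MeasureTheory.integral_image_eq_integral_abs_deriv_smul (measurableSet_Ioi)
    (my_inv_deriv m) (my_inv_inj m hm) (fun y => Real.exp (-(y^2) - m^2 / y^2))
  rw [my_inv_image m hm] at key
  rw [key]
  apply setIntegral_congr_fun measurableSet_Ioi
  intro y hy
  have hy' : (y:ℝ) ≠ 0 := ne_of_gt hy
  have h1 : |-(m / y^2)| = m / y^2 := by rw [abs_neg, abs_of_pos (by positivity)]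
  simp only [smul_eq_mul, h1]
  congr 2
  field_simp
  ring

lemma my_glasser (m : ℝ) (hm : 0 ≤ m) :
    ∫ y in Set.Ioi (0:ℝ), Real.exp (-(y^2) - m^2 / y^2)
      = Real.sqrt π / 2 * Real.exp (-(2*m)) := by
  rcases eq_or_lt_of_le hm with rfl | hm
  · simp only [ne_eq, OfNat.ofNat_ne_zero, not_false_eq_true, zero_pow, zero_div, sub_zero,
      mul_zero, neg_zero, Real.exp_zero, mul_one]
    have := integral_gaussian_Ioi 1
    simpa using this
  have hsum : Real.sqrt π = Real.exp (2*m) * ((∫ y in Set.Ioi (0:ℝ), Real.exp (-(y^2) - m^2 / y^2))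
      + ∫ y in Set.Ioi (0:ℝ), (m / y^2) * Real.exp (-(y^2) - m^2 / y^2)) := by
    have himg : (fun y : ℝ => y - m / y) '' Set.Ioi 0 = Set.univ := by
      apply Set.eq_univ_of_forall
      intro u
      set s := Real.sqrt (u^2 + 4*m) with hs
      have hs2 : s^2 = u^2 + 4*m := Real.sq_sqrt (by positivity)
      have hsu : |u| < s := by
        rw [← Real.sqrt_sq_eq_abs]
        exact Real.sqrt_lt_sqrt (sq_nonneg u) (by linarith)
      have hy : 0 < (u + s)/2 := by
        linarith [lt_of_le_of_lt (neg_le_abs u) hsu]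
      refine ⟨(u + s)/2, hy, ?_⟩
      have hus : u + s ≠ 0 := by intro h; rw [h] at hy; simp at hy
      field_simp
      nlinarith [hs2]
    have hderiv : ∀ y ∈ Set.Ioi (0:ℝ),
        HasDerivWithinAt (fun y : ℝ => y - m / y) (1 + m / y^2) (Set.Ioi 0) y := by
      intro y hy
      have h2 := ((hasDerivAt_id y).sub ((hasDerivAt_inv (ne_of_gt hy)).const_mul m)).hasDerivWithinAt (s := Set.Ioi 0)
      simp only [div_eq_mul_inv]
      convert h2 using 1
      have : (y:ℝ) ≠ 0 := ne_of_gt hy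
      · rfl
      · rfl
      · rfl
      · ring
    have hinj : Set.InjOn (fun y : ℝ => y - m / y) (Set.Ioi 0) := by
      intro a ha b hb hab
      simp only at hab
      have ha' : (a:ℝ) ≠ 0 := ne_of_gt ha
      have hb' : (b:ℝ) ≠ 0 := ne_of_gt hb
      field_simp at hab
      nlinarith [mul_pos (show (0:ℝ) < a from ha) (show (0:ℝ) < b from hb)]
    have key := MeasureTheory.integral_image_eq_integral_abs_deriv_smul (measurableSet_Ioi)
      hderiv hinj (fun u => Real.exp (-(u^2)))
    rw [himg] at key
    have hgauss : ∫ u in Set.univ, Real.exp (-(u^2)) = Real.sqrt π := by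
      rw [MeasureTheory.setIntegral_univ]
      have := integral_gaussian 1
      simpa using this
    rw [← hgauss, key, ← MeasureTheory.integral_add (my_integrable_g m) (my_my_integrable_g2 m hm),
      ← MeasureTheory.integral_const_mul]
    apply setIntegral_congr_fun measurableSet_Ioi
    intro y hy
    have hy' : (y:ℝ) ≠ 0 := ne_of_gt hy
    have h1 : |1 + m / y^2| = 1 + m / y^2 := abs_of_pos (by positivity)
    simp only [smul_eq_mul, h1]
    have hexp : Real.exp (-(y - m / y)^2) = Real.exp (2*m) * Real.exp (-(y^2) - m^2/y^2) := by
      rw [← Real.exp_add]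
      congr 1
      field_simp
      ring
    rw [hexp]
    ring
  have hAB := my_my_glasser_AB m hm
  have he : (0:ℝ) < Real.exp (2*m) := Real.exp_pos _
  have : Real.exp (-(2*m)) = (Real.exp (2*m))⁻¹ := by rw [← Real.exp_neg]
  rw [this]
  rw [← hAB] at hsum
  generalize (∫ y in Set.Ioi (0:ℝ), Real.exp (-(y^2) - m^2 / y^2)) = I at hsum ⊢
  field_simp
  linarith [hsum]


lemma my_glasser2_congr (a k : ℝ) (hk : 0 < k) :
    ∀ y ∈ Set.Ioi (0:ℝ),
      |-(k / y^2)| • (Real.exp (-(a^2*(k/y)^2) - k^2 / (k/y)^2) / (k/y)^2)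
        = k⁻¹ * Real.exp (-(y^2) - (a*k)^2 / y^2) := by
  intro y hy
  have hy' : (y:ℝ) ≠ 0 := ne_of_gt hy
  have hk' : (k:ℝ) ≠ 0 := ne_of_gt hk
  have h1 : |-(k / y^2)| = k / y^2 := by rw [abs_neg, abs_of_pos (by positivity)]
  simp only [smul_eq_mul, h1]
  have h2 : (-(a^2*(k/y)^2) - k^2 / (k/y)^2) = -(y^2) - (a*k)^2 / y^2 := by
    field_simp
    ring
  rw [h2]
  field_simp

lemma my_glasser2 (a k : ℝ) (ha : 0 ≤ a) (hk : 0 < k) :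
    ∫ x in Set.Ioi (0:ℝ), Real.exp (-(a^2*x^2) - k^2 / x^2) / x^2
      = Real.sqrt π / (2*k) * Real.exp (-(2*(a*k))) := by
  have key := MeasureTheory.integral_image_eq_integral_abs_deriv_smul (measurableSet_Ioi)
    (my_inv_deriv k) (my_inv_inj k hk)
    (fun x => Real.exp (-(a^2*x^2) - k^2 / x^2) / x^2)
  rw [my_inv_image k hk] at key
  rw [key]
  rw [setIntegral_congr_fun measurableSet_Ioi (my_glasser2_congr a k hk),
    MeasureTheory.integral_const_mul, my_glasser (a*k) (by positivity)]
  have hk' : (k:ℝ) ≠ 0 := ne_of_gt hk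
  field_simp

lemma my_integrable_glasser2 (a k : ℝ) (hk : 0 < k) :
    IntegrableOn (fun x : ℝ => Real.exp (-(a^2*x^2) - k^2 / x^2) / x^2) (Set.Ioi 0) := by
  have key := MeasureTheory.integrableOn_image_iff_integrableOn_abs_deriv_smul
    (measurableSet_Ioi) (my_inv_deriv k) (my_inv_inj k hk)
    (fun x => Real.exp (-(a^2*x^2) - k^2 / x^2) / x^2)
  rw [my_inv_image k hk] at key
  rw [key]
  apply MeasureTheory.IntegrableOn.congr_fun _ (fun y hy => (my_glasser2_congr a k hk y hy).symm)
    measurableSet_Ioi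
  exact (my_integrable_g (a*k)).const_mul _

end Aux

/-- `∫₀^∞ erf(b₁ c) exp(−b₂²/(4c²)) c^{−3} dc = (2/b₂²)(1 − exp(−b₁ b₂))`
for `b₁ > 0`, `b₂ > 0`. -/
theorem integral_erf_exp_inv_cube (b₁ b₂ : ℝ) (hb₁ : 0 < b₁) (hb₂ : 0 < b₂) :
    ∫ c in Set.Ioi (0:ℝ), erf (b₁ * c) * Real.exp (-(b₂^2) / (4*c^2)) / c^3
    = (2 / b₂^2) * (1 - Real.exp (-(b₁*b₂))) := by
  have hπ : (0:ℝ) < Real.sqrt π := Real.sqrt_pos.2 Real.pi_pos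
  set k : ℝ := b₂ / 2 with hk
  have hk0 : 0 < k := by positivity
  set f : ℝ → ℝ → ℝ := fun c s => Real.exp (-((b₁*s)^2*c^2) - k^2 / c^2) / c^2 with hf
  -- measurability of the uncurried function
  have hFm : Measurable (Function.uncurry f) := by
    unfold Function.uncurry
    apply Measurable.div _ ((measurable_fst.pow_const 2))
    apply Real.measurable_exp.comp
    apply Measurable.sub
    · exact (((measurable_snd.const_mul b₁).pow_const 2).mul (measurable_fst.pow_const 2)).neg
    · exact measurable_const.div (measurable_fst.pow_const 2)
  -- Step 1: pointwise rewrite of the integrand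
  have hpt : ∀ c ∈ Set.Ioi (0:ℝ),
      erf (b₁ * c) * Real.exp (-(b₂^2) / (4*c^2)) / c^3
        = (2 / Real.sqrt π * b₁) * ∫ s in Set.Ioc (0:ℝ) 1, f c s := by
    intro c hc
    have hc' : (c:ℝ) ≠ 0 := ne_of_gt hc
    have hbc : (0:ℝ) < b₁ * c := mul_pos hb₁ hc
    have h1 : (∫ b in (0:ℝ)..(b₁*c), Real.exp (-b^2))
        = (b₁*c) * ∫ s in (0:ℝ)..1, Real.exp (-((b₁*c)*s)^2) := by
      have := intervalIntegral.smul_integral_comp_mul_left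
        (f := fun b => Real.exp (-b^2)) (a := (0:ℝ)) (b := (1:ℝ)) (b₁*c)
      simp only [mul_zero, mul_one, smul_eq_mul] at this
      rw [← this]
    have h2 : (∫ s in (0:ℝ)..1, Real.exp (-((b₁*c)*s)^2))
        = ∫ s in Set.Ioc (0:ℝ) 1, Real.exp (-((b₁*c)*s)^2) :=
      intervalIntegral.integral_of_le zero_le_one
    have h3 : (fun s => f c s)
        = fun s => Real.exp (-((b₁*c)*s)^2) * (Real.exp (-(b₂^2) / (4*c^2)) / c^2) := by
      funext s
      rw [hf]
      simp only
      rw [← mul_div_assoc, ← Real.exp_add]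
      congr 2
      field_simp
      ring
    rw [erf, h1, h2, h3, MeasureTheory.integral_mul_const]
    field_simp
  rw [MeasureTheory.setIntegral_congr_fun measurableSet_Ioi hpt,
    MeasureTheory.integral_const_mul]
  -- Step 2: Fubini
  have hInt : Integrable (Function.uncurry f)
      ((volume.restrict (Set.Ioi (0:ℝ))).prod (volume.restrict (Set.Ioc (0:ℝ) 1))) := by
    rw [MeasureTheory.integrable_prod_iff hFm.aestronglyMeasurable]
    constructor
    · filter_upwards with c
      apply Continuous.integrableOn_Ioc
      simp only [Function.uncurry_apply_pair, hf]
      apply Continuous.div_const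
      apply Real.continuous_exp.comp
      fun_prop
    · have hG0 : IntegrableOn
          (fun x : ℝ => Real.exp (-((0:ℝ)^2*x^2) - k^2 / x^2) / x^2) (Set.Ioi 0) :=
        my_integrable_glasser2 0 k hk0
      refine MeasureTheory.Integrable.mono hG0 ?_ ?_
      · exact (hFm.norm.aestronglyMeasurable.integral_prod_right')
      · filter_upwards [MeasureTheory.ae_restrict_mem measurableSet_Ioi] with c hc
        have hc' : (c:ℝ) ≠ 0 := ne_of_gt hc
        have hG0nn : (0:ℝ) ≤ Real.exp (-((0:ℝ)^2*c^2) - k^2 / c^2) / c^2 := by positivity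
        rw [Real.norm_eq_abs, Real.norm_eq_abs, abs_of_nonneg hG0nn,
          abs_of_nonneg (MeasureTheory.integral_nonneg (fun s => norm_nonneg _))]
        calc ∫ s in Set.Ioc (0:ℝ) 1, ‖Function.uncurry f (c, s)‖
            ≤ ∫ _ in Set.Ioc (0:ℝ) 1, Real.exp (-((0:ℝ)^2*c^2) - k^2 / c^2) / c^2 := by
              apply MeasureTheory.setIntegral_mono_on
              · apply Integrable.norm
                apply Continuous.integrableOn_Ioc
                simp only [Function.uncurry_apply_pair, hf]
                apply Continuous.div_const
                apply Real.continuous_exp.comp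
                fun_prop
              · exact MeasureTheory.integrableOn_const
                  (by rw [Real.volume_Ioc]; norm_num)
              · exact measurableSet_Ioc
              · intro s hs
                have hs' : (0:ℝ) < s := hs.1
                simp only [Function.uncurry_apply_pair, hf, Real.norm_eq_abs]
                rw [abs_of_nonneg (by positivity)]
                gcongr
                nlinarith [mul_pos hb₁ hs', sq_nonneg (b₁*s*c)]
          _ = Real.exp (-((0:ℝ)^2*c^2) - k^2 / c^2) / c^2 := by
              rw [MeasureTheory.setIntegral_const]
              rw [Real.volume_real_Ioc]
              norm_num
  rw [MeasureTheory.integral_integral_swap hInt]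
  -- Step 3: inner integral via glasser2
  have hin : ∀ s ∈ Set.Ioc (0:ℝ) 1,
      (∫ c in Set.Ioi (0:ℝ), f c s) = Real.sqrt π / b₂ * Real.exp (-(b₁*b₂)*s) := by
    intro s hs
    have hs0 : 0 ≤ b₁ * s := (mul_pos hb₁ hs.1).le
    rw [hf]
    simp only
    rw [my_glasser2 (b₁*s) k hs0 hk0]
    rw [hk]
    congr 1
    · ring
    · congr 1
      ring
  rw [MeasureTheory.setIntegral_congr_fun measurableSet_Ioc hin,
    MeasureTheory.integral_const_mul]
  -- Step 4: outer integral
  have ht : (0:ℝ) < b₁ * b₂ := by positivity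
  have ht' : (b₁*b₂ : ℝ) ≠ 0 := ne_of_gt ht
  have hout : (∫ s in Set.Ioc (0:ℝ) 1, Real.exp (-(b₁*b₂)*s))
      = (b₁*b₂)⁻¹ * (1 - Real.exp (-(b₁*b₂))) := by
    rw [← intervalIntegral.integral_of_le zero_le_one]
    have h1 : (∫ s in (0:ℝ)..1, Real.exp (-(b₁*b₂)*s))
        = ∫ s in (0:ℝ)..1, (fun x => Real.exp (-x)) ((b₁*b₂)*s) := by
      congr 1
      funext s
      simp [neg_mul]
    rw [h1, intervalIntegral.integral_comp_mul_left (fun x => Real.exp (-x)) ht']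
    simp only [mul_zero, mul_one, smul_eq_mul]
    rw [intervalIntegral.integral_comp_neg (fun x => Real.exp x)]
    rw [integral_exp]
    simp
  rw [hout]
  field_simp
end

section
/- For every x > 0 and every v ≥ 0, one has ∫₀^∞ (4πτ)^{−3/2} · exp( −(x − v·τ)²/(4τ) ) dτ = 1/(4πx). In particular, in the absence of flow perpendicular to the source–receiver axis and of molecule degradation, any positive flow v along the axis from the source towards the receiver leaves the asymptotic impact of the noise source unchanged from the no-flow case. -/
open Real MeasureTheory Set Filter Topology

/-- The (unnormalized) error function `∫ t ∈ [0,y], exp (-t²)`. -/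
noncomputable def erfAux : ℝ → ℝ := fun y => ∫ t in (0:ℝ)..y, Real.exp (-t^2)

lemma erfAux_cont_integrand : Continuous fun t : ℝ => Real.exp (-t^2) := by
  continuity

lemma erfAux_hasDerivAt (y : ℝ) : HasDerivAt erfAux (Real.exp (-y^2)) y :=
  intervalIntegral.integral_hasDerivAt_right
    (erfAux_cont_integrand.intervalIntegrable _ _)
    (erfAux_cont_integrand.stronglyMeasurable.stronglyMeasurableAtFilter)
    erfAux_cont_integrand.continuousAt

lemma erfAux_zero : erfAux 0 = 0 := intervalIntegral.integral_same

lemma integrableOn_gauss : IntegrableOn (fun t : ℝ => Real.exp (-t^2)) (Ioi 0) := by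
  have h := (integrable_exp_neg_mul_sq (by norm_num : (0:ℝ) < 1)).integrableOn (s := Ioi 0)
  simpa using h

lemma integral_gauss_Ioi : ∫ t in Ioi (0:ℝ), Real.exp (-t^2) = Real.sqrt π / 2 := by
  have h := integral_gaussian_Ioi (1:ℝ)
  simpa using h

lemma erfAux_tendsto_atTop : Tendsto erfAux atTop (𝓝 (Real.sqrt π / 2)) := by
  rw [← integral_gauss_Ioi]
  exact intervalIntegral_tendsto_integral_Ioi 0 integrableOn_gauss tendsto_id

lemma integral_gauss_Iic : ∫ t in Iic (0:ℝ), Real.exp (-t^2) = Real.sqrt π / 2 := by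
  have h := integral_comp_neg_Ioi (0:ℝ) (fun t => Real.exp (-t^2))
  simp only [neg_zero] at h
  rw [← h, ← integral_gauss_Ioi]
  refine setIntegral_congr_fun measurableSet_Ioi fun t _ => ?_
  show Real.exp (-(-t)^2) = Real.exp (-t^2)
  rw [neg_sq]

lemma integrableOn_gauss_Iic : IntegrableOn (fun t : ℝ => Real.exp (-t^2)) (Iic 0) := by
  have h := (integrable_exp_neg_mul_sq (by norm_num : (0:ℝ) < 1)).integrableOn (s := Iic 0)
  simpa using h

lemma erfAux_tendsto_atBot : Tendsto erfAux atBot (𝓝 (-(Real.sqrt π / 2))) := by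
  have h : Tendsto (fun y : ℝ => ∫ t in y..(0:ℝ), Real.exp (-t^2)) atBot
      (𝓝 (∫ t in Iic (0:ℝ), Real.exp (-t^2))) :=
    intervalIntegral_tendsto_integral_Iic (0:ℝ) integrableOn_gauss_Iic tendsto_id
  rw [integral_gauss_Iic] at h
  have h2 := h.neg
  refine h2.congr fun y => ?_
  exact (intervalIntegral.integral_symm y 0).symm

/-- In the absence of perpendicular flow and molecule degradation, any nonnegative flow `v`
along the axis from the source towards the receiver leaves the asymptotic impact of the
noise source unchanged from the no-flow case: `∫₀^∞ (4πτ)^{−3/2} exp(−(x−vτ)²/(4τ)) dτ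
= 1/(4πx)`. -/
theorem asymptotic_impact_unchanged_by_positive_axial_flow (x v : ℝ)
    (hx : 0 < x) (hv : 0 ≤ v) :
    ∫ τ in Set.Ioi (0:ℝ), (4*π*τ) ^ (-(3:ℝ)/2) * Real.exp (-(x - v*τ)^2 / (4*τ))
    = 1/(4*π*x) := by
  have hπ : (0:ℝ) < π := Real.pi_pos
  set A : ℝ := Real.exp (v*x) with hA
  set u : ℝ → ℝ := fun τ => (x - v*τ)/(2*Real.sqrt τ) with hu_def
  set w : ℝ → ℝ := fun τ => (x + v*τ)/(2*Real.sqrt τ) with hw_def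
  set g : ℝ → ℝ := fun τ => if τ ≤ 0 then 0 else
    Real.sqrt π/2 * (1 + A) - (erfAux (u τ) + A * erfAux (w τ)) with hg_def
  set φ : ℝ → ℝ := fun τ => x/2 * (τ ^ (-(3:ℝ)/2) * Real.exp (-(x - v*τ)^2/(4*τ))) with hφ_def
  -- derivative on Ioi 0
  have key : ∀ τ ∈ Ioi (0:ℝ), HasDerivAt g (φ τ) τ := by
    intro τ hτ
    have hτ0' : (0:ℝ) < τ := hτ
    obtain ⟨s, hs, rfl⟩ : ∃ s : ℝ, 0 < s ∧ τ = s^2 :=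
      ⟨Real.sqrt τ, Real.sqrt_pos.2 hτ0', (Real.sq_sqrt hτ0'.le).symm⟩
    have hτ0 : (0:ℝ) < s^2 := hτ0'
    have hsq : Real.sqrt (s^2) = s := Real.sqrt_sq hs.le
    have hu : HasDerivAt u (-(x + v*s^2)/(4*s^2*s)) (s^2) := by
      have h1 : HasDerivAt (fun τ : ℝ => x - v*τ) (-v) (s^2) := by
        simpa using ((hasDerivAt_id (s^2)).const_mul v).const_sub x
      have h2 : HasDerivAt (fun τ : ℝ => 2*Real.sqrt τ) (2*(1/(2*Real.sqrt (s^2)))) (s^2) :=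
        (Real.hasDerivAt_sqrt hτ0.ne').const_mul 2
      have h3 := h1.div h2 (by rw [hsq]; positivity)
      rw [hu_def]
      convert h3 using 1
      case e'_4 => rfl
      case e'_5 => rfl
      case e'_8 => rfl
      rw [hsq]
      field_simp
      ring
    have hw : HasDerivAt w ((v*s^2 - x)/(4*s^2*s)) (s^2) := by
      have h1 : HasDerivAt (fun τ : ℝ => x + v*τ) v (s^2) := by
        simpa using ((hasDerivAt_id (s^2)).const_mul v).const_add x
      have h2 : HasDerivAt (fun τ : ℝ => 2*Real.sqrt τ) (2*(1/(2*Real.sqrt (s^2)))) (s^2) :=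
        (Real.hasDerivAt_sqrt hτ0.ne').const_mul 2
      have h3 := h1.div h2 (by rw [hsq]; positivity)
      rw [hw_def]
      convert h3 using 1
      case e'_4 => rfl
      case e'_5 => rfl
      case e'_8 => rfl
      rw [hsq]
      field_simp
      ring
    have hU : HasDerivAt (fun τ => erfAux (u τ))
        (Real.exp (-(u (s^2))^2) * (-(x + v*s^2)/(4*s^2*s))) (s^2) :=
      (erfAux_hasDerivAt (u (s^2))).comp (s^2) hu
    have hW : HasDerivAt (fun τ => A * erfAux (w τ))
        (A * (Real.exp (-(w (s^2))^2) * ((v*s^2 - x)/(4*s^2*s)))) (s^2) :=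
      ((erfAux_hasDerivAt (w (s^2))).comp (s^2) hw).const_mul A
    have hG : HasDerivAt (fun τ => Real.sqrt π/2 * (1 + A) - (erfAux (u τ) + A * erfAux (w τ)))
        (-(Real.exp (-(u (s^2))^2) * (-(x + v*s^2)/(4*s^2*s))
          + A * (Real.exp (-(w (s^2))^2) * ((v*s^2 - x)/(4*s^2*s))))) (s^2) :=
      (hU.add hW).const_sub _
    have heq : g =ᶠ[𝓝 (s^2)]
        fun τ => Real.sqrt π/2 * (1 + A) - (erfAux (u τ) + A * erfAux (w τ)) := by
      filter_upwards [Ioi_mem_nhds hτ0] with r hr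
      simp [hg_def, not_le.2 (mem_Ioi.1 hr)]
    have hder := hG.congr_of_eventuallyEq heq
    convert hder using 1
    case e'_4 => rfl
    case e'_5 => rfl
    have E1 : Real.exp (-(x - v*s^2)^2/(4*s^2)) = Real.exp (-(u (s^2))^2) := by
      congr 1
      rw [hu_def]
      simp only
      rw [hsq, div_pow, mul_pow]
      ring_nf
    have hAe : A * Real.exp (-(w (s^2))^2) = Real.exp (-(u (s^2))^2) := by
      rw [hA, ← Real.exp_add]
      congr 1
      rw [hu_def, hw_def]
      simp only
      rw [hsq, div_pow, div_pow, mul_pow]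
      have hs2 : s^2 ≠ 0 := by positivity
      field_simp
      ring
    have h32 : (s^2 : ℝ) ^ (-(3:ℝ)/2) = (s^2 * s)⁻¹ := by
      rw [show (-(3:ℝ)/2) = -(3/2) by ring, Real.rpow_neg hτ0.le]
      congr 1
      rw [show ((3:ℝ)/2) = 1 + 1/2 by norm_num, Real.rpow_add hτ0, Real.rpow_one,
        ← Real.sqrt_eq_rpow, hsq]
    rw [hφ_def]
    simp only
    rw [h32, E1]
    have hAe' : A * (Real.exp (-(w (s^2))^2) * ((v*s^2 - x)/(4*s^2*s)))
        = Real.exp (-(u (s^2))^2) * ((v*s^2 - x)/(4*s^2*s)) := by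
      rw [← hAe]; ring
    rw [hAe']
    field_simp
    ring
  -- nonnegativity of φ
  have hφpos : ∀ τ ∈ Ioi (0:ℝ), 0 ≤ φ τ := by
    intro τ hτ
    have hτ0 : (0:ℝ) < τ := hτ
    have h1 : (0:ℝ) ≤ τ ^ (-(3:ℝ)/2) := Real.rpow_nonneg hτ0.le _
    rw [hφ_def]
    exact mul_nonneg (by positivity) (mul_nonneg h1 (Real.exp_nonneg _))
  -- continuity at 0 within Ici 0
  have hu_top : Tendsto u (𝓝[>] (0:ℝ)) atTop := by
    have h1 : Tendsto (fun τ : ℝ => x - v*τ) (𝓝[>] (0:ℝ)) (𝓝 x) := by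
      have : Tendsto (fun τ : ℝ => x - v*τ) (𝓝 (0:ℝ)) (𝓝 (x - v*0)) := by
        exact (tendsto_const_nhds.sub ((continuous_const.mul continuous_id).tendsto 0))
      simpa using this.mono_left nhdsWithin_le_nhds
    have h2 : Tendsto (fun τ : ℝ => (2*Real.sqrt τ)⁻¹) (𝓝[>] (0:ℝ)) atTop := by
      apply tendsto_inv_nhdsGT_zero.comp
      rw [tendsto_nhdsWithin_iff]
      constructor
      · have : Tendsto (fun τ : ℝ => 2*Real.sqrt τ) (𝓝 (0:ℝ)) (𝓝 (2*Real.sqrt 0)) :=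
          (continuous_const.mul Real.continuous_sqrt).tendsto 0
        simpa using this.mono_left nhdsWithin_le_nhds
      · filter_upwards [self_mem_nhdsWithin] with τ hτ
        have : (0:ℝ) < τ := hτ
        have := Real.sqrt_pos.2 this
        exact mem_Ioi.2 (by positivity)
    have := h1.pos_mul_atTop hx h2
    refine this.congr fun τ => ?_
    simp [hu_def, hw_def, div_eq_mul_inv]
  have hw_top0 : Tendsto w (𝓝[>] (0:ℝ)) atTop := by
    have h1 : Tendsto (fun τ : ℝ => x + v*τ) (𝓝[>] (0:ℝ)) (𝓝 x) := by
      have : Tendsto (fun τ : ℝ => x + v*τ) (𝓝 (0:ℝ)) (𝓝 (x + v*0)) :=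
        (tendsto_const_nhds.add ((continuous_const.mul continuous_id).tendsto 0))
      simpa using this.mono_left nhdsWithin_le_nhds
    have h2 : Tendsto (fun τ : ℝ => (2*Real.sqrt τ)⁻¹) (𝓝[>] (0:ℝ)) atTop := by
      apply tendsto_inv_nhdsGT_zero.comp
      rw [tendsto_nhdsWithin_iff]
      constructor
      · have : Tendsto (fun τ : ℝ => 2*Real.sqrt τ) (𝓝 (0:ℝ)) (𝓝 (2*Real.sqrt 0)) :=
          (continuous_const.mul Real.continuous_sqrt).tendsto 0
        simpa using this.mono_left nhdsWithin_le_nhds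
      · filter_upwards [self_mem_nhdsWithin] with τ hτ
        have : (0:ℝ) < τ := hτ
        have := Real.sqrt_pos.2 this
        exact mem_Ioi.2 (by positivity)
    have := h1.pos_mul_atTop hx h2
    refine this.congr fun τ => ?_
    simp [hu_def, hw_def, div_eq_mul_inv]
  have hcont : ContinuousWithinAt g (Ici (0:ℝ)) 0 := by
    rw [show (Ici (0:ℝ)) = insert 0 (Ioi 0) by
          ext y; simp [le_iff_lt_or_eq, eq_comm, or_comm]]
    rw [continuousWithinAt_insert_self]
    unfold ContinuousWithinAt
    have hg0 : g 0 = 0 := by simp [hg_def]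
    rw [hg0]
    have hlim : Tendsto (fun τ => Real.sqrt π/2 * (1 + A) - (erfAux (u τ) + A * erfAux (w τ)))
        (𝓝[>] (0:ℝ)) (𝓝 (Real.sqrt π/2 * (1 + A) - (Real.sqrt π/2 + A * (Real.sqrt π/2)))) := by
      exact tendsto_const_nhds.sub ((erfAux_tendsto_atTop.comp hu_top).add
        ((erfAux_tendsto_atTop.comp hw_top0).const_mul A))
    have : Real.sqrt π/2 * (1 + A) - (Real.sqrt π/2 + A * (Real.sqrt π/2)) = 0 := by ring
    rw [this] at hlim
    refine hlim.congr' ?_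
    filter_upwards [self_mem_nhdsWithin] with τ hτ
    simp [hg_def, not_le.2 (mem_Ioi.1 hτ)]
  -- limit at infinity
  have hsqrt_top : Tendsto Real.sqrt atTop atTop := by
    have := tendsto_rpow_atTop (by norm_num : (0:ℝ) < 1/2)
    refine this.congr' ?_
    filter_upwards [eventually_ge_atTop (0:ℝ)] with y hy
    rw [Real.sqrt_eq_rpow]
  have hinv0 : Tendsto (fun τ : ℝ => x/(2*Real.sqrt τ)) atTop (𝓝 0) := by
    have h2 : Tendsto (fun τ : ℝ => 2*Real.sqrt τ) atTop atTop :=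
      hsqrt_top.const_mul_atTop (by norm_num)
    have := h2.inv_tendsto_atTop
    have := this.const_mul x
    simpa [div_eq_mul_inv, mul_comm] using this
  have hgtop : Tendsto g atTop (𝓝 (Real.sqrt π)) := by
    have hUW : Tendsto (fun τ => erfAux (u τ) + A * erfAux (w τ)) atTop
        (𝓝 (Real.sqrt π/2 * (1 + A) - Real.sqrt π)) := by
      rcases eq_or_lt_of_le hv with hv0 | hvpos
      · -- v = 0
        subst hv0
        have hA1 : A = 1 := by simp [hA]
        have huw : ∀ τ : ℝ, u τ = x/(2*Real.sqrt τ) ∧ w τ = x/(2*Real.sqrt τ) := by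
          intro τ; constructor <;> simp [hu_def, hw_def]
        have hu0 : Tendsto u atTop (𝓝 0) := by
          refine hinv0.congr fun τ => ?_; rw [(huw τ).1]
        have hw0 : Tendsto w atTop (𝓝 0) := by
          refine hinv0.congr fun τ => ?_; rw [(huw τ).2]
        have hcontE : ContinuousAt erfAux 0 := (erfAux_hasDerivAt 0).continuousAt
        have h1 : Tendsto (fun τ => erfAux (u τ)) atTop (𝓝 (erfAux 0)) :=
          (hcontE.tendsto).comp hu0
        have h2 : Tendsto (fun τ => erfAux (w τ)) atTop (𝓝 (erfAux 0)) :=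
          (hcontE.tendsto).comp hw0
        have := h1.add (h2.const_mul A)
        rw [erfAux_zero] at this
        convert this using 2
        rw [hA1]; ring
      · -- v > 0
        have hu_bot : Tendsto u atTop atBot := by
          have hneg : Tendsto (fun τ : ℝ => -(v/2 * Real.sqrt τ)) atTop atBot :=
            tendsto_neg_atTop_atBot.comp (hsqrt_top.const_mul_atTop (by positivity))
          have hle : ∀ᶠ τ : ℝ in atTop, x/(2*Real.sqrt τ) ≤ x :=
            hinv0.eventually_le_const hx
          have hsum : Tendsto (fun τ : ℝ => x/(2*Real.sqrt τ) + -(v/2 * Real.sqrt τ))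
              atTop atBot := tendsto_atBot_add_left_of_ge' atTop x hle hneg
          refine hsum.congr' ?_
          filter_upwards [eventually_gt_atTop (0:ℝ)] with τ hτ
          obtain ⟨s, hs, rfl⟩ : ∃ s : ℝ, 0 < s ∧ τ = s^2 :=
            ⟨Real.sqrt τ, Real.sqrt_pos.2 hτ, (Real.sq_sqrt hτ.le).symm⟩
          rw [hu_def]
          simp only
          rw [Real.sqrt_sq hs.le]
          field_simp
          ring
        have hw_top : Tendsto w atTop atTop := by
          have hpos : Tendsto (fun τ : ℝ => v/2 * Real.sqrt τ) atTop atTop :=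
            hsqrt_top.const_mul_atTop (by positivity)
          have hsum : Tendsto (fun τ : ℝ => x/(2*Real.sqrt τ) + v/2 * Real.sqrt τ)
              atTop atTop :=
            Tendsto.nonneg_add_atTop (fun τ => by positivity) hpos
          refine hsum.congr' ?_
          filter_upwards [eventually_gt_atTop (0:ℝ)] with τ hτ
          obtain ⟨s, hs, rfl⟩ : ∃ s : ℝ, 0 < s ∧ τ = s^2 :=
            ⟨Real.sqrt τ, Real.sqrt_pos.2 hτ, (Real.sq_sqrt hτ.le).symm⟩
          rw [hw_def]
          simp only
          rw [Real.sqrt_sq hs.le]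
          field_simp
        have h1 : Tendsto (fun τ => erfAux (u τ)) atTop (𝓝 (-(Real.sqrt π / 2))) :=
          erfAux_tendsto_atBot.comp hu_bot
        have h2 : Tendsto (fun τ => erfAux (w τ)) atTop (𝓝 (Real.sqrt π / 2)) :=
          erfAux_tendsto_atTop.comp hw_top
        have := h1.add (h2.const_mul A)
        convert this using 2
        ring
    have this : Tendsto (fun τ => Real.sqrt π/2 * (1 + A) - (erfAux (u τ) + A * erfAux (w τ)))
        atTop (𝓝 (Real.sqrt π/2 * (1 + A) - (Real.sqrt π/2 * (1 + A) - Real.sqrt π))) :=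
      tendsto_const_nhds.sub hUW
    have h2 : Real.sqrt π/2 * (1 + A) - (Real.sqrt π/2 * (1 + A) - Real.sqrt π)
        = Real.sqrt π := by ring
    rw [h2] at this
    refine this.congr' ?_
    filter_upwards [eventually_gt_atTop (0:ℝ)] with τ hτ
    simp [hg_def, not_le.2 hτ]
  -- apply FTC
  have hFTC := integral_Ioi_of_hasDerivAt_of_nonneg hcont key hφpos hgtop
  have hg0 : g 0 = 0 := by simp [hg_def]
  rw [hg0, sub_zero] at hFTC
  -- convert the target integral
  have hconv : ∀ τ ∈ Ioi (0:ℝ),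
      (4*π*τ) ^ (-(3:ℝ)/2) * Real.exp (-(x - v*τ)^2 / (4*τ))
      = ((4*π) ^ (-(3:ℝ)/2) * (2/x)) * φ τ := by
    intro τ hτ
    have hτ0 : (0:ℝ) < τ := hτ
    rw [Real.mul_rpow (by positivity : (0:ℝ) ≤ 4*π) hτ0.le, hφ_def]
    simp only
    field_simp
  rw [setIntegral_congr_fun measurableSet_Ioi hconv, MeasureTheory.integral_const_mul _ _, hFTC]
  rw [show (-(3:ℝ)/2) = -(3/2) by ring, Real.rpow_neg (by positivity : (0:ℝ) ≤ 4*π)]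
  have h4π : (4*π) ^ ((3:ℝ)/2) = (4*π) * Real.sqrt (4*π) := by
    rw [show ((3:ℝ)/2) = 1 + 1/2 by norm_num, Real.rpow_add (by positivity), Real.rpow_one,
      ← Real.sqrt_eq_rpow]
  rw [h4π]
  have hs4π : Real.sqrt (4*π) = 2 * Real.sqrt π := by
    rw [show (4:ℝ)*π = 2^2*π by norm_num, Real.sqrt_mul (by positivity), Real.sqrt_sq (by norm_num)]
  rw [hs4π]
  have hππ : Real.sqrt π * Real.sqrt π = π := Real.mul_self_sqrt hπ.le
  have hsπ : (0:ℝ) < Real.sqrt π := Real.sqrt_pos.2 hπ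
  field_simp
end
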